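/- Let M be a Cohen–Macaulay squarefree module of dimension d over S = k[x₁,…,xₙ], and l ≥ 2. Then M is l-Cohen–Macaulay (i.e., for every W ⊆ [n] with #W < l, the restriction M|_{−W} := M|_{[n]∖W} is either zero or Cohen–Macaulay of dimension d) if and only if β_{i,F}^S(M) = 0 for all F ⊆ [n] and i ∈ ℕ with i > n − d − l + 1 and #F < i + d. -/

import Mathlib

open MvPolynomial Finset
open scoped Classical
set_option linter.unusedSectionVars false
set_option maxHeartbeats 1000000
set_option synthInstance.maxHeartbeats 400000

noncomputable section

def chi {ι : Type} [DecidableEq ι] (F : Finset ι) : ι → ℕ := fun j => if j ∈ F then 1 else 0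
def mon (k : Type) [Field k] {ι : Type} [Fintype ι] (b : ι → ℕ) : MvPolynomial ι k :=
  ∏ j, (X j : MvPolynomial ι k) ^ (b j)

structure GradedMod (k : Type) [Field k] (ι : Type) [Fintype ι] [DecidableEq ι] where
  carrier : Type
  [acg : AddCommGroup carrier]
  [modS : Module (MvPolynomial ι k) carrier]
  [modk : Module k carrier]
  [tower : IsScalarTower k (MvPolynomial ι k) carrier]
  deg : (ι → ℕ) → Submodule k carrier
  internal : DirectSum.IsInternal deg
  mul_mem : ∀ (j : ι) (a : ι → ℕ) (x : carrier), x ∈ deg a →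
      (X j : MvPolynomial ι k) • x ∈ deg (a + Pi.single j 1)
  finite : Module.Finite (MvPolynomial ι k) carrier

attribute [instance] GradedMod.acg GradedMod.modS GradedMod.modk GradedMod.tower

namespace GradedMod

variable {k : Type} [Field k] {ι : Type} [Fintype ι] [DecidableEq ι]

lemma mon_zero : mon k (0 : ι → ℕ) = 1 := by simp [mon]

lemma mon_add (a b : ι → ℕ) : mon k (a + b) = mon k a * mon k b := by
  simp [mon, pow_add, Finset.prod_mul_distrib]

lemma mon_single (j : ι) : mon k (Pi.single j 1 : ι → ℕ) = X j := by
  rw [mon, Finset.prod_eq_single j]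
  · simp
  · intro b _ hb; rw [Pi.single_eq_of_ne hb]; simp
  · intro h; exact absurd (Finset.mem_univ j) h

lemma smul_comm_k (M : GradedMod k ι) (p : MvPolynomial ι k) (c : k) (x : M.carrier) :
    p • (c • x) = c • (p • x) := by
  rw [← IsScalarTower.algebraMap_smul (MvPolynomial ι k) c x, smul_smul, mul_comm,
    ← smul_smul, IsScalarTower.algebraMap_smul]

lemma mon_smul_mem (M : GradedMod k ι) :
    ∀ (n : ℕ) (b a : ι → ℕ), ∑ j, b j = n → ∀ x ∈ M.deg a, mon k b • x ∈ M.deg (a + b) := by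
  intro n
  induction n with
  | zero =>
    intro b a hb x hx
    have hb0 : b = 0 := by
      funext j
      have := (Finset.sum_eq_zero_iff).1 hb j (Finset.mem_univ j)
      simpa using this
    subst hb0
    simpa [mon_zero] using hx
  | succ m ih =>
    intro b a hb x hx
    obtain ⟨j, hj⟩ : ∃ j, b j ≠ 0 := by
      by_contra hc
      push_neg at hc
      rw [Finset.sum_eq_zero fun j _ => hc j] at hb
      exact Nat.succ_ne_zero m hb.symm
    set b' := Function.update b j (b j - 1) with hb'
    have hbb : b = b' + Pi.single j 1 := by
      funext i
      by_cases hij : i = j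
      · subst hij
        simp only [Pi.add_apply, hb', Function.update_self, Pi.single_eq_same]
        omega
      · simp [hb', Function.update_of_ne hij, Pi.single_eq_of_ne hij]
    have hsum : ∑ i, b' i = m := by
      have h1 : ∑ i, b i = (∑ i, b' i) + ∑ i, (Pi.single j 1 : ι → ℕ) i := by
        rw [← Finset.sum_add_distrib]; rw [hbb]; rfl
      have h2 : ∑ i, (Pi.single j 1 : ι → ℕ) i = 1 := by
        simp [Finset.sum_pi_single']
      omega
    have h1 := ih b' a hsum x hx
    have h2 := M.mul_mem j (a + b') _ h1
    have h3 : mon k b • x = (X j : MvPolynomial ι k) • (mon k b' • x) := by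
      rw [hbb, mon_add, mon_single, smul_smul, mul_comm]
    rw [h3, hbb, ← add_assoc]
    exact h2

end GradedMod

namespace GradedMod
variable {k : Type} [Field k] {ι : Type} [Fintype ι] [DecidableEq ι]

/-- Yanagawa's squarefreeness condition: multiplication by `x^b` is a bijection
`M_a → M_{a+b}` whenever `supp b ⊆ supp a`. -/
def IsSquarefree (M : GradedMod k ι) : Prop :=
  ∀ a b : ι → ℕ, (∀ j, b j ≠ 0 → a j ≠ 0) →
    Set.BijOn (fun x : M.carrier => mon k b • x) (M.deg a) (M.deg (a + b))

lemma chi_insert {ℓ : ι} {F : Finset ι} (h : ℓ ∉ F) :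
    chi (insert ℓ F) = chi F + Pi.single ℓ 1 := by
  funext j
  by_cases hj : j = ℓ
  · subst hj; simp [chi, h, Pi.single_eq_same]
  · simp [chi, hj, Pi.single_eq_of_ne hj]

lemma chi_sdiff {F G : Finset ι} (h : F ⊆ G) : chi F + chi (G \ F) = chi G := by
  funext j
  by_cases hF : j ∈ F
  · simp [chi, hF, h hF, Finset.mem_sdiff]
  · by_cases hG : j ∈ G <;> simp [chi, hF, hG, Finset.mem_sdiff]

/-- Multiplication by the variable `x_ℓ` as a `k`-linear map on squarefree graded pieces. -/
def multMap (M : GradedMod k ι) (ℓ : ι) (F : Finset ι) (h : ℓ ∉ F) :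
    M.deg (chi F) →ₗ[k] M.deg (chi (insert ℓ F)) where
  toFun x := ⟨(X ℓ : MvPolynomial ι k) • (x : M.carrier), by
    have h1 := M.mul_mem ℓ (chi F) x.1 x.2
    rw [chi_insert h]; exact h1⟩
  map_add' x y := by ext; simp [smul_add]
  map_smul' c x := by
    ext
    have h1 : ((c • x : M.deg (chi F)) : M.carrier) = c • (x : M.carrier) := rfl
    simp only [RingHom.id_apply, SetLike.val_smul, h1]
    exact M.smul_comm_k _ c _

end GradedMod

/-- A "combinatorial squarefree module": a family of `k`-vector spaces indexed by the
squarefree degrees `F ⊆ ι` together with the multiplication maps `x^{G∖F} : M_F → M_G`. -/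
structure CombSqMod (k : Type) [Field k] (ι : Type) [Fintype ι] [DecidableEq ι] where
  piece : Finset ι → Type
  [acg : ∀ F, AddCommGroup (piece F)]
  [modk : ∀ F, Module k (piece F)]
  mult : ∀ (F G : Finset ι), F ⊆ G → (piece F →ₗ[k] piece G)

attribute [instance] CombSqMod.acg CombSqMod.modk

namespace CombSqMod

variable {k : Type} [Field k] {ι : Type} [Fintype ι] [DecidableEq ι]

/-- Index set of the degree-`F` strand of the Koszul complex on the variables in `W`. -/
abbrev kIdx (W F : Finset ι) (j : ℕ) : Type := {E : Finset ι // E ⊆ W ∧ E ⊆ F ∧ E.card = j}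

/-- Terms of the degree-`F` strand of the Koszul complex of `N` over `k[xⱼ : j ∈ W]`. -/
abbrev kSpace (N : CombSqMod k ι) (W F : Finset ι) (j : ℕ) : Type :=
  ∀ E : kIdx W F j, N.piece (F \ E.1)

/-- Koszul sign (with respect to a fixed enumeration of the variables). -/
def ksign (E : Finset ι) (ℓ : ι) : ℤ :=
  (-1 : ℤ) ^ (E.filter fun j => Fintype.equivFin ι j < Fintype.equivFin ι ℓ).card

/-- The Koszul differential (degree-`F` strand, variables in `W`). -/
def kd (N : CombSqMod k ι) (W F : Finset ι) (j : ℕ) :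
    kSpace N W F (j + 1) →ₗ[k] kSpace N W F j :=
  LinearMap.pi fun E' =>
    ∑ ℓ ∈ ((F ∩ W) \ E'.1).attach,
      ksign E'.1 ℓ.1 •
        ((N.mult (F \ insert ℓ.1 E'.1) (F \ E'.1)
            (Finset.sdiff_subset_sdiff (Finset.Subset.refl F) (Finset.subset_insert ℓ.1 E'.1))).comp
          (LinearMap.proj (⟨insert ℓ.1 E'.1, by
              have h := ℓ.2
              simp only [Finset.mem_sdiff, Finset.mem_inter] at h
              exact ⟨Finset.insert_subset h.1.2 E'.2.1, Finset.insert_subset h.1.1 E'.2.2.1,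
                by rw [Finset.card_insert_of_notMem h.2, E'.2.2.2]⟩⟩ : kIdx W F (j + 1))))

/-- Cycles of the Koszul complex. -/
def kcycles (N : CombSqMod k ι) (W F : Finset ι) : (i : ℕ) → Submodule k (kSpace N W F i)
  | 0 => ⊤
  | (j + 1) => LinearMap.ker (kd N W F j)

/-- The graded Betti number `β_{i,F}` of `N` over `k[xⱼ : j ∈ W]`, defined (as usual, for
squarefree degrees) as the `k`-dimension of the degree-`F` part of the `i`-th Koszul homology,
i.e. of `[Tor_i(k, N)]_F`. -/
def bettiNum (N : CombSqMod k ι) (W : Finset ι) (i : ℕ) (F : Finset ι) : ℕ :=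
  Module.finrank k
    (↥(kcycles N W F i) ⧸
      (Submodule.comap (kcycles N W F i).subtype (LinearMap.range (kd N W F i))))

/-- The (Krull) dimension of the restriction `N|_W`: for squarefree modules this is the
maximal cardinality of a face `F ⊆ W` with nonvanishing piece. -/
def combDim (N : CombSqMod k ι) (W : Finset ι) : ℕ :=
  Finset.sup (W.powerset.filter fun F => Nontrivial (N.piece F)) Finset.card

/-- `N|_W` is a Cohen–Macaulay module of dimension `d` over `k[xⱼ : j ∈ W]`
(via the Auslander–Buchsbaum characterization: `β_{i,F} = 0` for `i > #W − d`). -/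
def IsCMon (N : CombSqMod k ι) (W : Finset ι) (d : ℕ) : Prop :=
  combDim N W = d ∧
    ∀ (i : ℕ) (F : Finset ι), F ⊆ W → (W.card : ℤ) - d < i → bettiNum N W i F = 0

/-- The restriction `N|_W` is the zero module. -/
def IsZeroOn (N : CombSqMod k ι) (W : Finset ι) : Prop :=
  ∀ F : Finset ι, F ⊆ W → Subsingleton (N.piece F)

/-- `N` is `l`-Cohen–Macaulay: for every `W` with `#W < l`, the restriction of `N` away
from `W` is zero or Cohen–Macaulay of the same dimension as `N`. -/
def lCM (N : CombSqMod k ι) (l : ℕ) : Prop :=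
  ∀ W : Finset ι, W.card < l →
    IsZeroOn N Wᶜ ∨ IsCMon N Wᶜ (combDim N Finset.univ)

/-- `N` is generated by its degree-`0` part. -/
def GenByDeg0 (N : CombSqMod k ι) : Prop :=
  ∀ G : Finset ι, Function.Surjective (N.mult ∅ G (Finset.empty_subset G))

end CombSqMod

namespace GradedMod

variable {k : Type} [Field k] {ι : Type} [Fintype ι] [DecidableEq ι]

/-- The combinatorial squarefree module underlying a graded module: pieces are the
squarefree graded components `M_F := M_{χ_F}` and the maps are multiplication by
`x^{G ∖ F}`. -/
def toComb (M : GradedMod k ι) : CombSqMod k ι where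
  piece F := M.deg (chi F)
  mult F G hFG :=
    { toFun := fun x => ⟨mon k (chi (G \ F)) • x.1, by
        have h1 := M.mon_smul_mem (∑ j, chi (G \ F) j) (chi (G \ F)) (chi F) rfl x.1 x.2
        rwa [chi_sdiff hFG] at h1⟩
      map_add' := fun x y => by ext; simp [smul_add]
      map_smul' := fun c x => by
        ext
        have h1 : ((c • x : M.deg (chi F)) : M.carrier) = c • (x : M.carrier) := rfl
        simp only [RingHom.id_apply, SetLike.val_smul, h1]
        exact M.smul_comm_k _ c _ }



/-- The graded Betti numbers `β_{i,F}^S(M)` of `M` over `S = k[xⱼ : j ∈ ι]`. -/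
def betti (M : GradedMod k ι) (i : ℕ) (F : Finset ι) : ℕ :=
  CombSqMod.bettiNum M.toComb Finset.univ i F

/-- The Krull dimension of `M` (for squarefree modules: the largest size of a face with
nonzero component). -/
def dim (M : GradedMod k ι) : ℕ := CombSqMod.combDim M.toComb Finset.univ

/-- `M` is a Cohen–Macaulay module of dimension `d`. -/
def IsCMdim (M : GradedMod k ι) (d : ℕ) : Prop := CombSqMod.IsCMon M.toComb Finset.univ d

/-- `M` is `l`-Cohen–Macaulay. -/
def lCM (M : GradedMod k ι) (l : ℕ) : Prop := CombSqMod.lCM M.toComb l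

end GradedMod

namespace GradedMod
open CombSqMod
variable {k : Type} [Field k] {ι : Type} [Fintype ι] [DecidableEq ι] {M : GradedMod k ι}

/-- value of an element of a squarefree piece in the ambient module -/
def pval (M : GradedMod k ι) {F : Finset ι} (x : M.toComb.piece F) : M.carrier := Subtype.val x

lemma pval_mult (G G' : Finset ι) (h : G ⊆ G') (x : M.toComb.piece G) :
    M.pval (M.toComb.mult G G' h x) = mon k (chi (G' \ G)) • M.pval x := rfl

lemma pval_add {F : Finset ι} (x y : M.toComb.piece F) : M.pval (x + y) = M.pval x + M.pval y := rfl

lemma pval_zsmul {F : Finset ι} (c : ℤ) (x : M.toComb.piece F) : M.pval (c • x) = c • M.pval x := rfl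

lemma pval_zero {F : Finset ι} : M.pval (0 : M.toComb.piece F) = 0 := rfl

lemma pval_inj {F : Finset ι} {x y : M.toComb.piece F} (h : M.pval x = M.pval y) : x = y :=
  Subtype.ext h

def pvalHom (M : GradedMod k ι) (F : Finset ι) : M.toComb.piece F →ₗ[k] M.carrier where
  toFun := M.pval
  map_add' _ _ := rfl
  map_smul' _ _ := rfl

def pcongr {G G' : Finset ι} (h : G = G') (x : M.toComb.piece G) : M.toComb.piece G' :=
  ⟨M.pval x, by rw [← h]; exact x.2⟩

lemma pval_pcongr {G G' : Finset ι} (h : G = G') (x : M.toComb.piece G) :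
    M.pval (pcongr h x) = M.pval x := rfl

lemma sdiff_sdiff_insert (F E' : Finset ι) {ℓ : ι} (hF : ℓ ∈ F) (hE : ℓ ∉ E') :
    (F \ E') \ (F \ insert ℓ E') = {ℓ} := by
  ext a
  simp only [Finset.mem_sdiff, Finset.mem_insert, Finset.mem_singleton, not_and, not_not]
  constructor
  · rintro ⟨⟨haF, haE⟩, h2⟩
    rcases h2 haF with h | h
    · exact h
    · exact absurd h haE
  · rintro rfl
    exact ⟨⟨hF, hE⟩, fun _ => Or.inl rfl⟩

lemma mon_chi_singleton (ℓ : ι) : mon k (chi ({ℓ} : Finset ι)) = X ℓ := by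
  have h : chi ({ℓ} : Finset ι) = Pi.single ℓ 1 := by
    funext j
    by_cases hj : j = ℓ
    · subst hj; simp [chi, Pi.single_eq_same]
    · simp [chi, hj, Pi.single_eq_of_ne hj]
  rw [h, mon_single]

/-- total-function access to components of a Koszul strand element -/
def cval (M : GradedMod k ι) (W F : Finset ι) (j : ℕ) (y : kSpace M.toComb W F j)
    (E : Finset ι) : M.carrier :=
  if h : E ⊆ W ∧ E ⊆ F ∧ E.card = j then M.pval (y ⟨E, h⟩) else 0

lemma cval_spec (W F : Finset ι) (j : ℕ) (y : kSpace M.toComb W F j) (E : kIdx W F j) :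
    cval M W F j y E.1 = M.pval (y E) := by
  rw [cval, dif_pos E.2]

lemma cval_ext' {W F W' F' : Finset ι} {j : ℕ} {y : kSpace M.toComb W F j}
    {y' : kSpace M.toComb W' F' j}
    (hiff : ∀ E : Finset ι, (E ⊆ W ∧ E ⊆ F ∧ E.card = j) ↔ (E ⊆ W' ∧ E ⊆ F' ∧ E.card = j))
    (h : ∀ E (h1 : E ⊆ W ∧ E ⊆ F ∧ E.card = j) (h2 : E ⊆ W' ∧ E ⊆ F' ∧ E.card = j),
      M.pval (y ⟨E, h1⟩) = M.pval (y' ⟨E, h2⟩)) :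
    ∀ E, cval M W F j y E = cval M W' F' j y' E := by
  intro E
  unfold cval
  by_cases hE : E ⊆ W ∧ E ⊆ F ∧ E.card = j
  · rw [dif_pos hE, dif_pos ((hiff E).mp hE), h E hE ((hiff E).mp hE)]
  · rw [dif_neg hE, dif_neg (fun hc => hE ((hiff E).mpr hc))]

/-- The central computational description of the Koszul differential. -/
lemma kd_cval (W F : Finset ι) (j : ℕ) (y : kSpace M.toComb W F (j+1)) (E' : kIdx W F j) :
    M.pval ((kd M.toComb W F j y) E') =
      ∑ ℓ ∈ (F ∩ W) \ E'.1,
        (ksign E'.1 ℓ : ℤ) • ((X ℓ : MvPolynomial ι k) • cval M W F (j+1) y (insert ℓ E'.1)) := by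
  rw [← Finset.sum_attach (((F ∩ W) \ E'.1))
    (fun ℓ => (ksign E'.1 ℓ : ℤ) • ((X ℓ : MvPolynomial ι k) • cval M W F (j+1) y (insert ℓ E'.1)))]
  rw [kd, LinearMap.pi_apply, LinearMap.sum_apply]
  rw [show M.pval = ⇑(M.pvalHom (F \ E'.1)) from rfl, map_sum]
  refine Finset.sum_congr rfl ?_
  intro ℓ _
  have hmem := ℓ.2
  simp only [Finset.mem_sdiff, Finset.mem_inter] at hmem
  rw [LinearMap.smul_apply, LinearMap.coe_comp, Function.comp_apply, LinearMap.proj_apply]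
  rw [show ⇑(M.pvalHom (F \ E'.1)) = M.pval from rfl]
  rw [pval_zsmul, pval_mult]
  rw [sdiff_sdiff_insert F E'.1 hmem.1.1 hmem.2, mon_chi_singleton]
  rw [cval_spec W F (j+1) y ⟨insert ℓ.1 E'.1, _⟩]

/-- exactness of the degree-`F` strand of the Koszul complex on `W` at homological degree `i` -/
def ExactAt (M : GradedMod k ι) (W F : Finset ι) (i : ℕ) : Prop :=
  kcycles M.toComb W F i ≤ LinearMap.range (kd M.toComb W F i)

def reindex {W W' F : Finset ι} (h : F ∩ W = F ∩ W') {j : ℕ}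
    (y : kSpace M.toComb W F j) : kSpace M.toComb W' F j :=
  fun E => y ⟨E.1, ⟨fun a ha => (Finset.mem_inter.mp (h.symm ▸
      Finset.mem_inter.mpr ⟨E.2.2.1 ha, E.2.1 ha⟩ : a ∈ F ∩ W)).2, E.2.2.1, E.2.2.2⟩⟩

lemma prop_iff_of_inter {W W' F : Finset ι} (h : F ∩ W = F ∩ W') (j : ℕ) :
    ∀ E : Finset ι, (E ⊆ W ∧ E ⊆ F ∧ E.card = j) ↔ (E ⊆ W' ∧ E ⊆ F ∧ E.card = j) := by
  intro E
  constructor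
  · rintro ⟨h1, h2, h3⟩
    refine ⟨fun a ha => ?_, h2, h3⟩
    have : a ∈ F ∩ W' := h ▸ Finset.mem_inter.mpr ⟨h2 ha, h1 ha⟩
    exact (Finset.mem_inter.mp this).2
  · rintro ⟨h1, h2, h3⟩
    refine ⟨fun a ha => ?_, h2, h3⟩
    have : a ∈ F ∩ W := h.symm ▸ Finset.mem_inter.mpr ⟨h2 ha, h1 ha⟩
    exact (Finset.mem_inter.mp this).2

lemma cval_reindex {W W' F : Finset ι} (h : F ∩ W = F ∩ W') {j : ℕ}
    (y : kSpace M.toComb W F j) :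
    ∀ E, cval M W' F j (reindex h y) E = cval M W F j y E := by
  refine cval_ext' (fun E => (prop_iff_of_inter h j E).symm) ?_
  intro E h1 h2
  rfl

lemma kd_reindex {W W' F : Finset ι} (h : F ∩ W = F ∩ W') {j : ℕ}
    (y : kSpace M.toComb W F (j+1)) :
    kd M.toComb W' F j (reindex h y) = reindex h (kd M.toComb W F j y) := by
  funext E'
  apply pval_inj (M := M)
  rw [show M.pval ((reindex h (kd M.toComb W F j y)) E') =
      M.pval ((kd M.toComb W F j y) ⟨E'.1, _⟩) from rfl]
  rw [kd_cval, kd_cval]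
  rw [show ((F ∩ W') \ E'.1) = ((F ∩ W) \ E'.1) by rw [h]]
  refine Finset.sum_congr rfl ?_
  intro ℓ _
  rw [cval_reindex h]

lemma reindex_kcycles {W W' F : Finset ι} (h : F ∩ W = F ∩ W') {i : ℕ}
    {z : kSpace M.toComb W F i} (hz : z ∈ kcycles M.toComb W F i) :
    reindex h z ∈ kcycles M.toComb W' F i := by
  cases i with
  | zero => exact Submodule.mem_top
  | succ j =>
    have hz' : kd M.toComb W F j z = 0 := hz
    show kd M.toComb W' F j (reindex h z) = 0
    rw [kd_reindex h, hz']
    funext E'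
    rfl

lemma exact_transfer {W W' F : Finset ι} (h : F ∩ W = F ∩ W') {i : ℕ}
    (he : ExactAt M W F i) : ExactAt M W' F i := by
  intro z' hz'
  have h' : F ∩ W' = F ∩ W := h.symm
  obtain ⟨η, hη⟩ := he (reindex_kcycles h' hz')
  refine ⟨reindex h η, ?_⟩
  rw [kd_reindex h, hη]
  funext E
  rcases E with ⟨E1, hE⟩
  rfl

lemma bettiNum_eq_zero_of_exact {W F : Finset ι} {i : ℕ} (h : ExactAt M W F i) :
    bettiNum M.toComb W i F = 0 := by
  have htop : Submodule.comap (kcycles M.toComb W F i).subtype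
      (LinearMap.range (kd M.toComb W F i)) = ⊤ := by
    rw [Submodule.eq_top_iff']
    intro x
    exact h x.2
  rw [bettiNum]
  haveI : Subsingleton ((kcycles M.toComb W F i) ⧸
      (Submodule.comap (kcycles M.toComb W F i).subtype (LinearMap.range (kd M.toComb W F i)))) :=
    Submodule.Quotient.subsingleton_iff.mpr htop
  exact Module.finrank_zero_of_subsingleton

lemma fd_deg (M : GradedMod k ι) (a : ι → ℕ) : FiniteDimensional k (M.deg a) := by
  classical
  obtain ⟨G, hG⟩ := M.finite.fg_top
  have hsurj := M.internal.surjective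
  choose v hv using hsurj
  have hdec : ∀ y : M.carrier, y = ∑ d ∈ (v y).support, ((v y) d : M.carrier) := by
    intro y
    conv_lhs => rw [← hv y, ← DirectSum.sum_support_of (v y)]
    rw [map_sum]
    apply Finset.sum_congr rfl
    intro d _
    exact DirectSum.coeAddMonoidHom_of M.deg d ((v y) d)
  let T : Finset M.carrier := G.biUnion fun g =>
    ((v g).support.filter (fun d => d ≤ a)).image
      (fun d => mon k (a - d) • ((v g d : M.carrier)))
  have hTdeg : ∀ x ∈ T, x ∈ M.deg a := by
    intro x hx
    simp only [T, Finset.mem_biUnion, Finset.mem_image, Finset.mem_filter] at hx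
    obtain ⟨g, -, d, ⟨hd, hda⟩, rfl⟩ := hx
    have h1 := M.mon_smul_mem (∑ j, (a - d) j) (a - d) d rfl (v g d : M.carrier) (v g d).2
    have h2 : d + (a - d) = a := by funext j; exact Nat.add_sub_cancel' (hda j)
    rwa [h2] at h1
  have hspan : M.deg a ≤ Submodule.span k (↑T : Set M.carrier) := by
    intro x hx
    have hxG : x ∈ Submodule.span (MvPolynomial ι k) (↑G : Set M.carrier) := by
      rw [hG]; exact Submodule.mem_top
    obtain ⟨f, -, hf⟩ := Submodule.mem_span_finset.mp hxG
    set R : Submodule k M.carrier := ⨆ (e : ι → ℕ) (_ : e ≠ a), M.deg e with hR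
    have hterm : ∀ (p : MvPolynomial ι k) (y : M.carrier), y ∈ G →
        p • y ∈ Submodule.span k (↑T : Set M.carrier) ⊔ R := by
      intro p y hy
      have h1 : p • y = ∑ d ∈ (v y).support, p • ((v y) d : M.carrier) := by
        conv_lhs => rw [hdec y]
        rw [Finset.smul_sum]
      rw [h1]
      apply Submodule.sum_mem
      intro d hd
      have h2 : p • ((v y) d : M.carrier) = ∑ m ∈ p.support,
          (MvPolynomial.monomial m (MvPolynomial.coeff m p)) • ((v y) d : M.carrier) := by
        conv_lhs => rw [MvPolynomial.as_sum p]
        rw [Finset.sum_smul]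
      rw [h2]
      apply Submodule.sum_mem
      intro m hm
      have hCsmul : ∀ (c : k) (W : M.carrier), (MvPolynomial.C c : MvPolynomial ι k) • W = c • W := by
        intro c W
        rw [← MvPolynomial.algebraMap_eq, IsScalarTower.algebraMap_smul]
      have hmon : (MvPolynomial.monomial m (MvPolynomial.coeff m p)) • ((v y) d : M.carrier)
          = (MvPolynomial.coeff m p) • (mon k ⇑m • ((v y) d : M.carrier)) := by
        rw [MvPolynomial.monomial_eq, Finsupp.prod_pow]
        rw [show (∏ j, (X j : MvPolynomial ι k) ^ m j) = mon k ⇑m from rfl]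
        rw [mul_smul, hCsmul]
      rw [hmon]
      have hmem : mon k ⇑m • ((v y) d : M.carrier) ∈ M.deg (d + ⇑m) :=
        M.mon_smul_mem (∑ j, m j) ⇑m d rfl _ (v y d).2
      by_cases hda : d + ⇑m = a
      · apply Submodule.mem_sup_left
        apply Submodule.smul_mem
        apply Submodule.subset_span
        have hdle : d ≤ a := by
          intro j
          rw [← hda]
          exact Nat.le_add_right _ _
        have hadm : a - d = ⇑m := by
          funext j
          have := congrFun hda j
          simp only [Pi.add_apply] at this
          simp only [Pi.sub_apply]
          omega
        simp only [T, Finset.coe_biUnion, Finset.mem_biUnion, Finset.mem_image, Finset.mem_filter,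
          Finset.mem_coe, Set.mem_iUnion]
        exact ⟨y, hy, d, ⟨hd, hdle⟩, by rw [hadm]⟩
      · apply Submodule.mem_sup_right
        apply Submodule.smul_mem
        rw [hR]
        apply Submodule.mem_iSup_of_mem (d + ⇑m)
        apply Submodule.mem_iSup_of_mem hda
        exact hmem
    have hQ : x ∈ Submodule.span k (↑T : Set M.carrier) ⊔ R := by
      rw [← hf]
      exact Submodule.sum_mem _ (fun g hg => hterm (f g) g hg)
    obtain ⟨u, hu, w, hw, huw⟩ := Submodule.mem_sup.mp hQ
    have hudeg : u ∈ M.deg a :=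
      (Submodule.span_le.mpr (fun t ht => hTdeg t ht)) hu
    have hw2 : w ∈ M.deg a := by
      have hwx : w = x - u := by
        rw [← huw]; abel
      rw [hwx]
      exact Submodule.sub_mem _ hx hudeg
    have hw0 : w = 0 :=
      (Submodule.disjoint_def.mp ((iSupIndep_def.mp M.internal.submodule_iSupIndep) a)) w hw2 hw
    have hxu : x = u := by rw [← huw, hw0, add_zero]
    rw [hxu]
    exact hu
  haveI : FiniteDimensional k (Submodule.span k (↑T : Set M.carrier)) :=
    FiniteDimensional.span_finset k T
  exact Submodule.finiteDimensional_of_le hspan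


instance piece_fd (F : Finset ι) : FiniteDimensional k (M.toComb.piece F) := fd_deg M (chi F)

instance kspace_fd (W F : Finset ι) (j : ℕ) : FiniteDimensional k (kSpace M.toComb W F j) := by
  infer_instance

lemma exact_of_bettiNum_eq_zero {W F : Finset ι} {i : ℕ}
    (h : bettiNum M.toComb W i F = 0) : ExactAt M W F i := by
  intro z hz
  rw [bettiNum] at h
  haveI := Module.finrank_zero_iff.mp h
  have h0 : (Submodule.Quotient.mk ⟨z, hz⟩ : (kcycles M.toComb W F i) ⧸
      (Submodule.comap (kcycles M.toComb W F i).subtype (LinearMap.range (kd M.toComb W F i)))) = 0 :=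
    Subsingleton.elim _ _
  rw [Submodule.Quotient.mk_eq_zero] at h0
  exact h0

lemma bettiNum_eq_zero_of_subsingleton (W F : Finset ι) (i : ℕ)
    (hs : ∀ G ⊆ F, Subsingleton (M.toComb.piece G)) : bettiNum M.toComb W i F = 0 := by
  haveI : ∀ E : kIdx W F i, Subsingleton (M.toComb.piece (F \ E.1)) :=
    fun E => hs _ (Finset.sdiff_subset)
  haveI : Subsingleton (kSpace M.toComb W F i) := by infer_instance
  exact bettiNum_eq_zero_of_exact (fun z _ => ⟨0, Subsingleton.elim _ _⟩)


example (c : ℤ) (p : MvPolynomial ι k) (v : M.carrier) : c • (p • v) = p • (c • v) :=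
  smul_comm c p v

def nu (g ℓ : ι) : ℤ := if Fintype.equivFin ι g < Fintype.equivFin ι ℓ then -1 else 1

lemma ksign_insert' {E : Finset ι} {g : ι} (hg : g ∉ E) (ℓ : ι) :
    (ksign (insert g E) ℓ : ℤ) = nu g ℓ * ksign E ℓ := by
  unfold ksign nu
  rw [Finset.filter_insert]
  by_cases h : Fintype.equivFin ι g < Fintype.equivFin ι ℓ
  · rw [if_pos h, if_pos h, Finset.card_insert_of_notMem (fun hc => hg (Finset.mem_filter.mp hc).1),
      pow_succ, mul_comm]
  · rw [if_neg h, if_neg h, one_mul]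

def eps (g : ι) (E : Finset ι) : ℤ :=
  (-1) ^ (E.filter fun j => Fintype.equivFin ι g < Fintype.equivFin ι j).card

lemma eps_insert {E : Finset ι} {ℓ : ι} (hℓ : ℓ ∉ E) (g : ι) :
    eps g (insert ℓ E) = nu g ℓ * eps g E := by
  unfold eps nu
  rw [Finset.filter_insert]
  by_cases h : Fintype.equivFin ι g < Fintype.equivFin ι ℓ
  · rw [if_pos h, if_pos h, Finset.card_insert_of_notMem (fun hc => hℓ (Finset.mem_filter.mp hc).1),
      pow_succ, mul_comm]
  · rw [if_neg h, if_neg h, one_mul]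

lemma eps_mul_self (g : ι) (E : Finset ι) : eps g E * eps g E = 1 := by
  unfold eps
  rw [← pow_add]
  exact Even.neg_one_pow ⟨_, rfl⟩

lemma nu_mul_nu {g ℓ : ι} (h : g ≠ ℓ) : nu ℓ g * nu g ℓ = -1 := by
  unfold nu
  have hne : Fintype.equivFin ι g ≠ Fintype.equivFin ι ℓ := fun hc => h ((Fintype.equivFin ι).injective hc)
  rcases lt_or_gt_of_ne hne with hlt | hgt
  · rw [if_neg (asymm hlt), if_pos hlt, one_mul]
  · rw [if_pos hgt, if_neg (asymm hgt), mul_one]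

lemma sdiff_insert_erase (F E : Finset ι) (g : ι) : F \ insert g E = (F.erase g) \ E := by
  ext a
  simp only [Finset.mem_sdiff, Finset.mem_insert, Finset.mem_erase, not_or]
  tauto

lemma inter_insert_right {F U : Finset ι} {g : ι} (hgF : g ∈ F) :
    F ∩ insert g U = insert g (F ∩ U) := by
  ext a
  simp only [Finset.mem_inter, Finset.mem_insert]
  constructor
  · rintro ⟨h1, h2 | h2⟩
    · exact Or.inl h2
    · exact Or.inr ⟨h1, h2⟩
  · rintro (rfl | ⟨h1, h2⟩)
    · exact ⟨hgF, Or.inl rfl⟩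
    · exact ⟨h1, Or.inr h2⟩

lemma insert_sdiff_not_mem {S E : Finset ι} {g : ι} (hg : g ∉ E) :
    insert g S \ E = insert g (S \ E) := by
  ext a
  simp only [Finset.mem_sdiff, Finset.mem_insert]
  constructor
  · rintro ⟨rfl | h1, h2⟩
    · exact Or.inl rfl
    · exact Or.inr ⟨h1, h2⟩
  · rintro (rfl | ⟨h1, h2⟩)
    · exact ⟨Or.inl rfl, hg⟩
    · exact ⟨Or.inr h1, h2⟩

lemma sdiff_insert_not_mem {S E : Finset ι} {g : ι} (hg : g ∉ S) :
    S \ insert g E = S \ E := by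
  ext a
  simp only [Finset.mem_sdiff, Finset.mem_insert, not_or]
  constructor
  · rintro ⟨h1, _, h3⟩; exact ⟨h1, h3⟩
  · rintro ⟨h1, h3⟩; exact ⟨h1, fun hc => hg (hc ▸ h1), h3⟩

lemma insert_sdiff_insert' {S E : Finset ι} (g : ι) :
    insert g S \ insert g E = S \ insert g E := by
  ext a
  simp only [Finset.mem_sdiff, Finset.mem_insert, not_or]
  constructor
  · rintro ⟨rfl | h1, h2, h3⟩
    · exact absurd rfl h2
    · exact ⟨h1, h2, h3⟩
  · rintro ⟨h1, h2, h3⟩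
    exact ⟨Or.inr h1, h2, h3⟩

lemma zsmul_shuffle {V : Type} [AddCommGroup V] [Module (MvPolynomial ι k) V]
    (c1 c2 c3 c4 : ℤ) (p : MvPolynomial ι k) (v : V) (h : c1 * c2 = c3 * c4) :
    c1 • (p • (c2 • v)) = c3 • (c4 • (p • v)) := by
  rw [smul_comm p c2, smul_smul, smul_smul, h, ← smul_smul c3 c4]

lemma zsmul_shuffle2 {V : Type} [AddCommGroup V] [Module (MvPolynomial ι k) V]
    (c1 c2 : ℤ) (p q : MvPolynomial ι k) (v : V) :
    c1 • (p • (c2 • (q • v))) = c2 • (q • (c1 • (p • v))) := by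
  rw [smul_comm p c2, smul_smul c1 c2, smul_smul p q, mul_comm c1 c2, mul_comm p q,
    ← smul_smul c2 c1, ← smul_smul q p, smul_comm c1 q]

lemma erase_inter_not_mem {F U : Finset ι} {g : ι} (hg : g ∉ U) :
    (F.erase g) ∩ U = F ∩ U := by
  ext a
  simp only [Finset.mem_inter, Finset.mem_erase]
  constructor
  · rintro ⟨⟨_, h1⟩, h2⟩; exact ⟨h1, h2⟩
  · rintro ⟨h1, h2⟩; exact ⟨⟨fun hc => hg (hc ▸ h2), h1⟩, h2⟩


lemma subsingleton_piece_of_forall_zero {F : Finset ι}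
    (h : ∀ z : M.toComb.piece F, z = 0) : Subsingleton (M.toComb.piece F) :=
  ⟨fun a b => (h a).trans (h b).symm⟩

lemma combDim_mono' {W' W : Finset ι} (h : W' ⊆ W) :
    combDim M.toComb W' ≤ combDim M.toComb W := by
  apply Finset.sup_mono
  apply Finset.filter_subset_filter
  exact Finset.powerset_mono.mpr h

lemma card_le_combDim' {P W : Finset ι} (h : P ⊆ W) (hnt : Nontrivial (M.toComb.piece P)) :
    P.card ≤ combDim M.toComb W := by
  apply Finset.le_sup
  rw [Finset.mem_filter]
  exact ⟨Finset.mem_powerset.mpr h, hnt⟩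

lemma main' {V : Finset ι} {t : ℕ} (hyp : ∀ F ⊆ V, ∀ i, t < i → ExactAt M F F i)
    (hstep : ∀ {U F : Finset ι} {g : ι}, g ∈ F → g ∉ U → U ⊆ F → ∀ i,
      ExactAt M U (F.erase g) i → ExactAt M (insert g U) F i → ExactAt M U F i) :
    ∀ U F : Finset ι, U ⊆ F → F ⊆ V → ∀ i, t < i → ExactAt M U F i := by
  suffices H : ∀ r U F, U ⊆ F → F ⊆ V → V.card - U.card ≤ r → ∀ i, t < i → ExactAt M U F i by
    intro U F hUF hFV i hi
    exact H (V.card - U.card) U F hUF hFV le_rfl i hi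
  intro r
  induction r with
  | zero =>
    intro U F hUF hFV hc i hi
    have hcard : V.card ≤ U.card := by
      haveI := Finset.card_le_card (hUF.trans hFV)
      omega
    have hUV : U = V := Finset.eq_of_subset_of_card_le (hUF.trans hFV) hcard
    have hFV' : F = V := Finset.Subset.antisymm hFV (hUV ▸ hUF)
    rw [hUV, hFV']
    exact hyp V (Finset.Subset.refl V) i hi
  | succ r ih =>
    suffices H2 : ∀ s U F, U ⊆ F → F ⊆ V → V.card - U.card ≤ r + 1 → F.card - U.card ≤ s →
        ∀ i, t < i → ExactAt M U F i by
      intro U F h1 h2 h3 i hi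
      exact H2 (F.card - U.card) U F h1 h2 h3 le_rfl i hi
    intro s
    induction s with
    | zero =>
      intro U F hUF hFV hc hs i hi
      have : U = F := Finset.eq_of_subset_of_card_le hUF
        (by haveI := Finset.card_le_card hUF; omega)
      subst this
      exact hyp U hFV i hi
    | succ s ih2 =>
      intro U F hUF hFV hc hs i hi
      by_cases hFU : F = U
      · subst hFU
        exact hyp F hFV i hi
      · have hss : U ⊂ F := hUF.ssubset_of_ne (Ne.symm hFU)
        obtain ⟨g, hgF, hgU⟩ := Finset.exists_of_ssubset hss
        refine hstep hgF hgU hUF i ?_ ?_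
        · refine ih2 U (F.erase g) (Finset.subset_erase.mpr ⟨hUF, hgU⟩)
            ((F.erase_subset g).trans hFV) hc ?_ i hi
          have := Finset.card_erase_of_mem hgF
          have := Finset.card_le_card hUF
          omega
        · refine ih (insert g U) F (Finset.insert_subset hgF hUF) hFV ?_ i hi
          have := Finset.card_insert_of_notMem hgU
          have h1 : (insert g U).card ≤ V.card :=
            Finset.card_le_card ((Finset.insert_subset hgF hUF).trans hFV)
          omega

lemma kill0 {F : Finset ι} (hex : ExactAt M F F 0)
    (hsub : ∀ ℓ ∈ F, Subsingleton (M.toComb.piece (F \ {ℓ}))) :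
    Subsingleton (M.toComb.piece F) := by
  apply subsingleton_piece_of_forall_zero
  intro z
  have hE0 : ((∅ : Finset ι) ⊆ F ∧ (∅ : Finset ι) ⊆ F ∧ (∅ : Finset ι).card = 0) :=
    ⟨Finset.empty_subset F, Finset.empty_subset F, Finset.card_empty⟩
  have hsd : ∀ E : kIdx F F 0, F \ (∅ : Finset ι) = F \ E.1 := by
    intro E
    rw [Finset.card_eq_zero.mp E.2.2.2]
  let z₀ : kSpace M.toComb F F 0 := fun E =>
    pcongr (hsd E) (pcongr (Finset.sdiff_empty (s := F)).symm z)
  obtain ⟨η, hη⟩ := hex (Submodule.mem_top : z₀ ∈ kcycles M.toComb F F 0)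
  have hval : M.pval z = M.pval ((kd M.toComb F F 0 η) ⟨∅, hE0⟩) := by
    rw [hη]
    rfl
  rw [kd_cval] at hval
  have hzero : ∀ ℓ ∈ (F ∩ F) \ (∅ : Finset ι), (ksign (∅ : Finset ι) ℓ : ℤ) •
      ((X ℓ : MvPolynomial ι k) • cval M F F 1 η (insert ℓ (∅ : Finset ι))) = 0 := by
    intro ℓ hℓ
    have hℓF : ℓ ∈ F := by
      simp only [Finset.mem_sdiff, Finset.mem_inter] at hℓ
      exact hℓ.1.1
    have hcv : cval M F F 1 η (insert ℓ (∅ : Finset ι)) = 0 := by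
      unfold cval
      by_cases hp : (insert ℓ (∅ : Finset ι) ⊆ F ∧ insert ℓ (∅ : Finset ι) ⊆ F ∧
          (insert ℓ (∅ : Finset ι)).card = 1)
      · rw [dif_pos hp]
        have hset : ({ℓ} : Finset ι) = insert ℓ (∅ : Finset ι) := rfl
        have hss := hsub ℓ hℓF
        rw [hset] at hss
        have h0 : η ⟨insert ℓ (∅ : Finset ι), hp⟩ = 0 := @Subsingleton.elim _ hss _ _
        rw [h0, pval_zero]
      · rw [dif_neg hp]
    rw [hcv, smul_zero, smul_zero]
  rw [Finset.sum_congr rfl hzero, Finset.sum_const_zero] at hval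
  apply pval_inj
  rw [hval, pval_zero]


lemma key' {V : Finset ι} {d : ℕ}
    (hyp : ∀ F ⊆ V, ∀ i : ℕ, (V.card : ℤ) - d < i → ExactAt M F F i)
    (hstep : ∀ {U F : Finset ι} {g : ι}, g ∈ F → g ∉ U → U ⊆ F → ∀ i,
      ExactAt M U (F.erase g) i → ExactAt M (insert g U) F i → ExactAt M U F i)
    (hdim : ∀ P ⊆ V, d ≤ P.card → Subsingleton (M.toComb.piece P)) :
    ∀ P ⊆ V, Subsingleton (M.toComb.piece P) := by
  by_cases hVd : V.card < d
  · -- "Nakayama" case: all Betti numbers vanish, including in homological degree 0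
    suffices H : ∀ c : ℕ, ∀ P ⊆ V, P.card ≤ c → Subsingleton (M.toComb.piece P) by
      intro P hPV
      exact H P.card P hPV le_rfl
    intro c
    induction c with
    | zero =>
      intro P hPV hc
      refine kill0 (hyp P hPV 0 (by push_cast; omega)) ?_
      intro ℓ hℓ
      exact absurd (hc.trans_lt' (Finset.card_pos.mpr ⟨ℓ, hℓ⟩)) (by omega)
    | succ c ih =>
      intro P hPV hc
      refine kill0 (hyp P hPV 0 (by push_cast; omega)) ?_
      intro ℓ hℓ
      refine ih _ ((Finset.sdiff_subset).trans hPV) ?_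
      have h1 : (P \ {ℓ}) = P.erase ℓ := (Finset.erase_eq P ℓ).symm
      rw [h1, Finset.card_erase_of_mem hℓ]
      omega
  · push_neg at hVd
    have hmain := main' (t := V.card - d)
      (fun F hFV i hi => hyp F hFV i (by push_cast; omega)) hstep
    suffices H : ∀ u : ℕ, ∀ U, U ⊆ V → U.card = u → Subsingleton (M.toComb.piece (V \ U)) by
      intro P hPV
      have h2 := H (V \ P).card (V \ P) Finset.sdiff_subset rfl
      rwa [Finset.sdiff_sdiff_self_left, Finset.inter_eq_right.mpr hPV] at h2
    intro u
    induction u using Nat.strong_induction_on with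
    | _ u IH =>
    intro U hUV hcard
    by_cases hsz : d ≤ (V \ U).card
    · exact hdim _ Finset.sdiff_subset hsz
    · push_neg at hsz
      have hcs : (V \ U).card = V.card - U.card := Finset.card_sdiff_of_subset hUV
      have hUcard := Finset.card_le_card hUV
      have hu : V.card - d < u := by omega
      apply subsingleton_piece_of_forall_zero
      intro z
      have hEU : ∀ E : kIdx U V u, E.1 = U := by
        intro E
        exact Finset.eq_of_subset_of_card_le E.2.1 (le_of_eq (by rw [E.2.2.2, hcard]))
      let zU : kSpace M.toComb U V u := fun E =>
        pcongr (show V \ U = V \ E.1 by rw [hEU E]) z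
      have hcyc : zU ∈ kcycles M.toComb U V u := by
        cases u with
        | zero => exact Submodule.mem_top
        | succ j =>
          show kd M.toComb U V j zU = 0
          funext E'
          haveI : Subsingleton (M.toComb.piece (V \ E'.1)) :=
            IH j (by omega) E'.1 (E'.2.1.trans hUV) E'.2.2.2
          exact Subsingleton.elim _ _
      obtain ⟨η, hη⟩ := hmain U V hUV (Finset.Subset.refl V) u hu hcyc
      have hUidx : (U ⊆ U ∧ U ⊆ V ∧ U.card = u) := ⟨Finset.Subset.refl U, hUV, hcard⟩
      have hval : M.pval z = M.pval ((kd M.toComb U V u η) ⟨U, hUidx⟩) := by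
        rw [hη]
        rfl
      rw [kd_cval] at hval
      have hrange : (V ∩ U) \ U = ∅ := by
        rw [Finset.inter_eq_right.mpr hUV, Finset.sdiff_self]
      rw [show ((V ∩ U) \ (⟨U, hUidx⟩ : kIdx U V u).1) = (∅ : Finset ι) from hrange,
        Finset.sum_empty] at hval
      apply pval_inj
      rw [hval, pval_zero]


lemma step' {U F : Finset ι} {g : ι} (hgF : g ∈ F) (hgU : g ∉ U) (hUF : U ⊆ F) (i : ℕ)
    (hA : ExactAt M U (F.erase g) i) (hC : ExactAt M (insert g U) F i) :
    ExactAt M U F i := by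
  intro z hz
  have hsubU : ∀ {E : Finset ι}, E ⊆ insert g U → g ∉ E → E ⊆ U := by
    intro E hE hg a ha
    rcases Finset.mem_insert.mp (hE ha) with h | h
    · exact absurd ha (h ▸ hg)
    · exact h
  -- the lift ζ of z to the strand over `insert g U`
  let ζ : kSpace M.toComb (insert g U) F i := fun E =>
    if hg : g ∈ E.1 then 0 else z ⟨E.1, ⟨hsubU E.2.1 hg, E.2.2⟩⟩
  have hcζ : ∀ E : Finset ι, cval M (insert g U) F i ζ E =
      if g ∈ E then 0 else cval M U F i z E := by
    intro E
    by_cases hg : g ∈ E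
    · rw [if_pos hg]
      unfold cval
      by_cases hp : E ⊆ insert g U ∧ E ⊆ F ∧ E.card = i
      · rw [dif_pos hp]
        show M.pval (if hg' : g ∈ E then _ else _) = 0
        rw [dif_pos hg, pval_zero]
      · rw [dif_neg hp]
    · rw [if_neg hg]
      unfold cval
      by_cases hp : E ⊆ insert g U ∧ E ⊆ F ∧ E.card = i
      · rw [dif_pos hp, dif_pos (⟨hsubU hp.1 hg, hp.2⟩ : E ⊆ U ∧ E ⊆ F ∧ E.card = i)]
        show M.pval (if hg' : g ∈ E then _ else _) = _
        rw [dif_neg hg]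
      · rw [dif_neg hp, dif_neg (fun hc : E ⊆ U ∧ E ⊆ F ∧ E.card = i =>
          hp ⟨hc.1.trans (Finset.subset_insert g U), hc.2⟩)]
  have hζcyc : ζ ∈ kcycles M.toComb (insert g U) F i := by
    cases i with
    | zero => exact Submodule.mem_top
    | succ j =>
      show kd M.toComb (insert g U) F j ζ = 0
      funext E'
      apply pval_inj (M := M)
      rw [kd_cval, show M.pval ((0 : kSpace M.toComb (insert g U) F j) E') = 0 from rfl]
      by_cases hgE' : g ∈ E'.1
      · apply Finset.sum_eq_zero
        intro ℓ hℓ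
        rw [hcζ, if_pos (Finset.mem_insert_of_mem hgE'), smul_zero, smul_zero]
      · rw [show (F ∩ insert g U) \ E'.1 = insert g ((F ∩ U) \ E'.1) by
          rw [inter_insert_right hgF, insert_sdiff_not_mem hgE']]
        have hgFU : g ∉ (F ∩ U) \ E'.1 := fun hc =>
          hgU (Finset.mem_inter.mp (Finset.mem_sdiff.mp hc).1).2
        rw [Finset.sum_insert hgFU]
        rw [hcζ, if_pos (Finset.mem_insert_self g E'.1), smul_zero, smul_zero, zero_add]
        have hz0 : kd M.toComb U F j z = 0 := hz
        have hcomp : M.pval ((kd M.toComb U F j z) ⟨E'.1, ⟨hsubU E'.2.1 hgE', E'.2.2⟩⟩) = 0 := by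
          rw [hz0]; rfl
        rw [kd_cval] at hcomp
        rw [← hcomp]
        apply Finset.sum_congr rfl
        intro ℓ hℓ
        have hℓU : ℓ ∈ U := (Finset.mem_inter.mp (Finset.mem_sdiff.mp hℓ).1).2
        have hgins : g ∉ insert ℓ E'.1 := by
          intro hc
          rcases Finset.mem_insert.mp hc with h | h
          · exact hgU (h ▸ hℓU)
          · exact hgE' h
        rw [hcζ, if_neg hgins]
  obtain ⟨η, hη⟩ := hC hζcyc
  have hains : ∀ E : Finset ι, E ⊆ U → E.card = i →
      (insert g E ⊆ insert g U ∧ insert g E ⊆ F ∧ (insert g E).card = i + 1) := by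
    intro E h1 h2
    refine ⟨Finset.insert_subset_insert g h1, Finset.insert_subset hgF ((h1.trans hUF)), ?_⟩
    rw [Finset.card_insert_of_notMem (fun hc => hgU (h1 hc)), h2]
  let a : kSpace M.toComb U (F.erase g) i := fun E =>
    eps g E.1 • pcongr (sdiff_insert_erase F E.1 g)
      (η ⟨insert g E.1, hains E.1 E.2.1 E.2.2.2⟩)
  have hca : ∀ E : Finset ι, g ∉ E →
      cval M U (F.erase g) i a E = eps g E • cval M (insert g U) F (i+1) η (insert g E) := by
    intro E hg
    unfold cval
    by_cases hp : E ⊆ U ∧ E ⊆ F.erase g ∧ E.card = i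
    · rw [dif_pos hp, dif_pos (hains E hp.1 hp.2.2)]
      show M.pval (eps g E • pcongr _ _) = _
      rw [pval_zsmul, pval_pcongr]
    · rw [dif_neg hp, dif_neg (fun hc : insert g E ⊆ insert g U ∧ insert g E ⊆ F ∧
          (insert g E).card = i + 1 => hp ?_), smul_zero]
      have h1 : E ⊆ U := fun x hx => by
        rcases Finset.mem_insert.mp (hc.1 (Finset.mem_insert_of_mem hx)) with h | h
        · exact absurd hx (h ▸ hg)
        · exact h
      refine ⟨h1, fun x hx => Finset.mem_erase.mpr ⟨fun hxg => hg (hxg ▸ hx), hc.2.1 (Finset.mem_insert_of_mem hx)⟩, ?_⟩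
      have := hc.2.2
      rw [Finset.card_insert_of_notMem hg] at this
      omega
  have hacyc : a ∈ kcycles M.toComb U (F.erase g) i := by
    cases i with
    | zero => exact Submodule.mem_top
    | succ j =>
      show kd M.toComb U (F.erase g) j a = 0
      funext E''
      apply pval_inj (M := M)
      rw [kd_cval, show M.pval ((0 : kSpace M.toComb U (F.erase g) j) E'') = 0 from rfl]
      have hgE'' : g ∉ E''.1 := fun hc => hgU (E''.2.1 hc)
      have hidx : insert g E''.1 ⊆ insert g U ∧ insert g E''.1 ⊆ F ∧
          (insert g E''.1).card = j + 1 := by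
        refine ⟨Finset.insert_subset_insert g E''.2.1,
          Finset.insert_subset hgF ((E''.2.2.1).trans (F.erase_subset g)), ?_⟩
        rw [Finset.card_insert_of_notMem hgE'', E''.2.2.2]
      have hcomp : M.pval ((kd M.toComb (insert g U) F (j+1) η) ⟨insert g E''.1, hidx⟩) = 0 := by
        rw [hη]
        show M.pval (if hg : g ∈ insert g E''.1 then (0 : M.toComb.piece _) else _) = 0
        rw [dif_pos (Finset.mem_insert_self g E''.1), pval_zero]
      rw [kd_cval] at hcomp
      rw [show (F ∩ insert g U) \ insert g E''.1 = (F ∩ U) \ E''.1 by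
        rw [inter_insert_right hgF, insert_sdiff_insert',
          sdiff_insert_not_mem (fun hc => hgU (Finset.mem_inter.mp hc).2)]] at hcomp
      rw [show ((F.erase g) ∩ U) \ E''.1 = (F ∩ U) \ E''.1 by rw [erase_inter_not_mem hgU]]
      have hsum : ∑ ℓ ∈ (F ∩ U) \ E''.1, (ksign E''.1 ℓ : ℤ) •
            ((X ℓ : MvPolynomial ι k) • cval M U (F.erase g) (j+1) a (insert ℓ E''.1))
          = eps g E''.1 • ∑ ℓ ∈ (F ∩ U) \ E''.1, (ksign (insert g E''.1) ℓ : ℤ) •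
            ((X ℓ : MvPolynomial ι k) •
              cval M (insert g U) F (j+1+1) η (insert ℓ (insert g E''.1))) := by
        rw [Finset.smul_sum]
        apply Finset.sum_congr rfl
        intro ℓ hℓ
        have hℓU : ℓ ∈ U := (Finset.mem_inter.mp (Finset.mem_sdiff.mp hℓ).1).2
        have hℓE'' : ℓ ∉ E''.1 := (Finset.mem_sdiff.mp hℓ).2
        have hgins : g ∉ insert ℓ E''.1 := by
          intro hc
          rcases Finset.mem_insert.mp hc with h | h
          · exact hgU (h ▸ hℓU)
          · exact hgE'' h
        rw [hca (insert ℓ E''.1) hgins, eps_insert hℓE'' g, ksign_insert' hgE'' ℓ]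
        rw [show insert g (insert ℓ E''.1) = insert ℓ (insert g E''.1) from
          Finset.insert_comm g ℓ E''.1]
        exact zsmul_shuffle _ _ _ _ _ _ (by ring)
      rw [hsum, hcomp, smul_zero]
  obtain ⟨α, hα⟩ := hA hacyc
  let b : kSpace M.toComb U F (i+1) := fun E =>
    η ⟨E.1, ⟨E.2.1.trans (Finset.subset_insert g U), E.2.2⟩⟩
  have hcb : ∀ E : Finset ι, g ∉ E →
      cval M U F (i+1) b E = cval M (insert g U) F (i+1) η E := by
    intro E hg
    unfold cval
    by_cases hp : E ⊆ U ∧ E ⊆ F ∧ E.card = i + 1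
    · rw [dif_pos hp, dif_pos (⟨hp.1.trans (Finset.subset_insert g U), hp.2⟩ :
        E ⊆ insert g U ∧ E ⊆ F ∧ E.card = i + 1)]
    · rw [dif_neg hp, dif_neg (fun hc : E ⊆ insert g U ∧ E ⊆ F ∧ E.card = i + 1 =>
        hp ⟨hsubU hc.1 hg, hc.2⟩)]
  have hbidx : ∀ E : Finset ι, E ⊆ U → E ⊆ F → E.card = i + 1 →
      (E ⊆ U ∧ E ⊆ F.erase g ∧ E.card = i + 1) := by
    intro E h1 h2 h3
    exact ⟨h1, fun x hx => Finset.mem_erase.mpr ⟨fun hc => hgU (hc ▸ h1 hx), h2 hx⟩, h3⟩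
  let β : kSpace M.toComb U F (i+1) := fun E =>
    (-(ksign E.1 g * eps g E.1)) • (M.toComb.mult (F \ insert g E.1) (F \ E.1)
      (Finset.sdiff_subset_sdiff (Finset.Subset.refl F) (Finset.subset_insert g E.1))
      (pcongr (sdiff_insert_erase F E.1 g).symm (α ⟨E.1, hbidx E.1 E.2.1 E.2.2.1 E.2.2.2⟩)))
  have hcβ : ∀ E : Finset ι, g ∉ E →
      cval M U F (i+1) β E =
        (-(ksign E g * eps g E : ℤ)) • ((X g : MvPolynomial ι k) •
          cval M U (F.erase g) (i+1) α E) := by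
    intro E hg
    unfold cval
    by_cases hp : E ⊆ U ∧ E ⊆ F ∧ E.card = i + 1
    · rw [dif_pos hp, dif_pos (hbidx E hp.1 hp.2.1 hp.2.2)]
      show M.pval ((-(ksign E g * eps g E : ℤ)) • _) = _
      rw [pval_zsmul, pval_mult, sdiff_sdiff_insert F E hgF hg, mon_chi_singleton, pval_pcongr]
    · rw [dif_neg hp, dif_neg (fun hc : E ⊆ U ∧ E ⊆ F.erase g ∧ E.card = i + 1 =>
        hp ⟨hc.1, hc.2.1.trans (F.erase_subset g), hc.2.2⟩), smul_zero, smul_zero]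
  refine ⟨b + β, ?_⟩
  funext E'
  obtain ⟨E1, hE1⟩ := E'
  have hgE1 : g ∉ E1 := fun hc => hgU (hE1.1 hc)
  apply pval_inj (M := M)
  have hsplit : (kd M.toComb U F i (b + β)) ⟨E1, hE1⟩ =
      (kd M.toComb U F i b) ⟨E1, hE1⟩ + (kd M.toComb U F i β) ⟨E1, hE1⟩ := by
    rw [map_add]
    rfl
  rw [hsplit, pval_add]
  have hgFU : g ∉ (F ∩ U) \ E1 := fun hc =>
    hgU (Finset.mem_inter.mp (Finset.mem_sdiff.mp hc).1).2
  -- the equation coming from `kd η = ζ` in degree E1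
  have hCprops : E1 ⊆ insert g U ∧ E1 ⊆ F ∧ E1.card = i :=
    ⟨hE1.1.trans (Finset.subset_insert g U), hE1.2⟩
  have hzeq : (ksign E1 g : ℤ) • ((X g : MvPolynomial ι k) •
        cval M (insert g U) F (i+1) η (insert g E1)) +
      (∑ ℓ ∈ (F ∩ U) \ E1, (ksign E1 ℓ : ℤ) • ((X ℓ : MvPolynomial ι k) •
        cval M (insert g U) F (i+1) η (insert ℓ E1))) = M.pval (z ⟨E1, hE1⟩) := by
    have h0 : M.pval ((kd M.toComb (insert g U) F i η) ⟨E1, hCprops⟩) = M.pval (z ⟨E1, hE1⟩) := by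
      rw [hη]
      show M.pval (if hg : g ∈ E1 then (0 : M.toComb.piece _) else _) = _
      rw [dif_neg hgE1]
    rw [kd_cval] at h0
    rw [show (F ∩ insert g U) \ E1 = insert g ((F ∩ U) \ E1) by
      rw [inter_insert_right hgF, insert_sdiff_not_mem hgE1], Finset.sum_insert hgFU] at h0
    exact h0
  -- (i) the kd b part
  have hkb : M.pval ((kd M.toComb U F i b) ⟨E1, hE1⟩) =
      ∑ ℓ ∈ (F ∩ U) \ E1, (ksign E1 ℓ : ℤ) • ((X ℓ : MvPolynomial ι k) •
        cval M (insert g U) F (i+1) η (insert ℓ E1)) := by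
    rw [kd_cval]
    apply Finset.sum_congr rfl
    intro ℓ hℓ
    have hℓU : ℓ ∈ U := (Finset.mem_inter.mp (Finset.mem_sdiff.mp hℓ).1).2
    have hgins : g ∉ insert ℓ E1 := by
      intro hc
      rcases Finset.mem_insert.mp hc with h | h
      · exact hgU (h ▸ hℓU)
      · exact hgE1 h
    rw [hcb _ hgins]
  -- relation between `cval η (insert g E1)` and `cval a E1`
  have hηa : cval M (insert g U) F (i+1) η (insert g E1) =
      eps g E1 • cval M U (F.erase g) i a E1 := by
    rw [hca E1 hgE1, smul_smul, eps_mul_self, one_smul]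
  -- (ii) the kd β part
  have haidx : E1 ⊆ U ∧ E1 ⊆ F.erase g ∧ E1.card = i :=
    ⟨hE1.1, fun x hx => Finset.mem_erase.mpr ⟨fun hc => hgU (hc ▸ hE1.1 hx), hE1.2.1 hx⟩, hE1.2.2⟩
  have hkβ : M.pval ((kd M.toComb U F i β) ⟨E1, hE1⟩) =
      ((ksign E1 g * eps g E1 : ℤ)) • ((X g : MvPolynomial ι k) •
        cval M U (F.erase g) i a E1) := by
    rw [kd_cval]
    have hstep1 : ∀ ℓ ∈ (F ∩ U) \ E1, (ksign E1 ℓ : ℤ) • ((X ℓ : MvPolynomial ι k) •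
          cval M U F (i+1) β (insert ℓ E1)) =
        ((ksign E1 g * eps g E1 : ℤ)) • ((X g : MvPolynomial ι k) •
          ((ksign E1 ℓ : ℤ) • ((X ℓ : MvPolynomial ι k) •
            cval M U (F.erase g) (i+1) α (insert ℓ E1)))) := by
      intro ℓ hℓ
      have hℓmem := Finset.mem_sdiff.mp hℓ
      have hℓU : ℓ ∈ U := (Finset.mem_inter.mp hℓmem.1).2
      have hℓE1 : ℓ ∉ E1 := hℓmem.2
      have hℓg : g ≠ ℓ := fun hc => hgU (hc ▸ hℓU)
      have hgins : g ∉ insert ℓ E1 := by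
        intro hc
        rcases Finset.mem_insert.mp hc with h | h
        · exact hgU (h ▸ hℓU)
        · exact hgE1 h
      rw [hcβ _ hgins, ksign_insert' hℓE1 g, eps_insert hℓE1 g]
      rw [show (-((nu ℓ g * (ksign E1 g : ℤ)) * (nu g ℓ * eps g E1))) =
        ((ksign E1 g * eps g E1 : ℤ)) by
          have hnn := nu_mul_nu hℓg
          linear_combination (-(ksign E1 g * eps g E1 : ℤ)) * hnn]
      exact zsmul_shuffle2 _ _ _ _ _
    rw [Finset.sum_congr rfl hstep1, ← Finset.smul_sum]
    congr 1
    rw [← Finset.smul_sum]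
    congr 1
    have h0 : M.pval ((kd M.toComb U (F.erase g) i α) ⟨E1, haidx⟩) = M.pval (a ⟨E1, haidx⟩) := by
      rw [hα]
    rw [kd_cval, show ((F.erase g) ∩ U) \ E1 = (F ∩ U) \ E1 by
      rw [erase_inter_not_mem hgU]] at h0
    rw [h0, cval, dif_pos haidx]
  -- put the pieces together
  rw [hkb, hkβ]
  have hK : ((ksign E1 g * eps g E1 : ℤ)) • ((X g : MvPolynomial ι k) •
        cval M U (F.erase g) i a E1) =
      (ksign E1 g : ℤ) • ((X g : MvPolynomial ι k) •
        cval M (insert g U) F (i+1) η (insert g E1)) := by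
    rw [hηa, smul_comm (X g : MvPolynomial ι k) ((eps g E1 : ℤ)), smul_smul, mul_comm]
  rw [hK]
  rw [add_comm] at hzeq
  rw [← hzeq]

end GradedMod

/-! **Statement 9** (Yanagawa, Theorem 2.5, (i) ⟺ (ii)).
Let `M` be a Cohen–Macaulay squarefree module of dimension `d` over `S = k[x₁,…,xₙ]` and
`l ≥ 2`.  Then `M` is `l`-Cohen–Macaulay (i.e. for every `W ⊆ [n]` with `#W < l` the
restriction `M|_{[n]∖W}` is zero or Cohen–Macaulay of dimension `d`) if and only if
`β_{i,F}^S(M) = 0` for all `F ⊆ [n]` and `i ∈ ℕ` with `i > n − d − l + 1` and `#F < i + d`. -/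
theorem squarefree_lCM_iff_betti_vanishing
    {k : Type} [Field k] {n : ℕ} (M : GradedMod k (Fin n))
    (hsf : M.IsSquarefree) (d : ℕ) (hCM : M.IsCMdim d) (l : ℕ) (hl : 2 ≤ l) :
    M.lCM l ↔
      ∀ (i : ℕ) (F : Finset (Fin n)),
        (n : ℤ) - d - l + 1 < (i : ℤ) → F.card < i + d → M.betti i F = 0 := by
  classical
  have hcardW : ∀ W : Finset (Fin n), Wᶜ.card = n - W.card := by
    intro W
    rw [Finset.card_compl, Fintype.card_fin]
  have hcardle : ∀ W : Finset (Fin n), W.card ≤ n := by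
    intro W
    have := Finset.card_le_univ W
    rwa [Fintype.card_fin] at this
  have hd' : CombSqMod.combDim M.toComb Finset.univ = d := hCM.1
  constructor
  · -- forward direction
    intro hlCM i F hi1 hi2
    have hmle : min (l - 1) (Fᶜ.card) ≤ Fᶜ.card := min_le_right _ _
    obtain ⟨W, hWsub, hWcard⟩ := Finset.exists_subset_card_eq hmle
    have hWl : W.card < l := by
      have h1 : W.card ≤ l - 1 := hWcard ▸ min_le_left _ _
      omega
    have hFW : F ⊆ Wᶜ := by
      intro a ha
      rw [Finset.mem_compl]
      intro haW
      have := hWsub haW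
      rw [Finset.mem_compl] at this
      exact this ha
    rcases hlCM W hWl with hzero | hcm
    · exact GradedMod.bettiNum_eq_zero_of_subsingleton Finset.univ F i
        (fun G hG => hzero G (hG.trans hFW))
    · rw [hd'] at hcm
      have hineq : (Wᶜ.card : ℤ) - d < i := by
        have h1 := hcardW W
        have h2 := hcardW F
        have h3 := hcardle F
        have h4 := hcardle W
        have h5 : W.card = min (l - 1) (Fᶜ.card) := hWcard
        have h6 : F.card ≤ Wᶜ.card := Finset.card_le_card hFW
        omega
      have hb := hcm.2 i F hFW hineq
      have hEx := GradedMod.exact_of_bettiNum_eq_zero hb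
      have htr : M.ExactAt Finset.univ F i :=
        GradedMod.exact_transfer (by rw [Finset.inter_univ]; exact (Finset.inter_eq_left.mpr hFW).symm ▸ rfl) hEx
      exact GradedMod.bettiNum_eq_zero_of_exact htr
  · -- backward direction
    intro hvan W hWl
    have hEx : ∀ F ⊆ Wᶜ, ∀ i : ℕ, ((Wᶜ.card : ℤ) - d < i) → M.ExactAt F F i := by
      intro F hF i hi
      have h6 : F.card ≤ Wᶜ.card := Finset.card_le_card hF
      have h1 : M.betti i F = 0 := by
        refine hvan i F ?_ ?_
        · have := hcardW W
          have := hcardle W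
          omega
        · have := hcardW W
          omega
      have hEx0 := GradedMod.exact_of_bettiNum_eq_zero h1
      exact GradedMod.exact_transfer (by simp) hEx0
    by_cases hz : ∀ P ⊆ Wᶜ, d ≤ P.card → Subsingleton (M.toComb.piece P)
    · left
      intro F hF
      exact GradedMod.key' (hEx) (fun hgF hgU hUF i hA hC => GradedMod.step' hgF hgU hUF i hA hC)
        hz F hF
    · right
      push_neg at hz
      obtain ⟨P, hPW, hPd, hPns⟩ := hz
      have hPnt : Nontrivial (M.toComb.piece P) := hPns
      constructor
      · rw [hd']
        apply le_antisymm
        · exact hd' ▸ GradedMod.combDim_mono' (Finset.subset_univ Wᶜ)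
        · exact hPd.trans (GradedMod.card_le_combDim' hPW hPnt)
      · intro i F hF hi
        rw [hd'] at hi
        apply GradedMod.bettiNum_eq_zero_of_exact
        have h6 : F.card ≤ Wᶜ.card := Finset.card_le_card hF
        have h1 : M.betti i F = 0 := by
          refine hvan i F ?_ ?_
          · have := hcardW W
            have := hcardle W
            omega
          · have := hcardW W
            omega
        have hEx0 := GradedMod.exact_of_bettiNum_eq_zero h1
        exact GradedMod.exact_transfer (by rw [Finset.inter_univ]; exact (Finset.inter_eq_left.mpr hF).symm ▸ rfl) hEx0
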